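/- For n > 2 and 1 < k < n, the identity ∫₁^∞ (t^n - 1)^{-k/n} dt = (sin(π/n) / sin((k-1)π/n)) · ∫₀¹ (1 - x^n)^{-k/n} dx holds. -/

import Mathlib

open MeasureTheory Set intervalIntegral

lemma betaAux_integrable {a b : ℝ} (ha : 0 < a) (hb : 0 < b) (hb1 : b ≠ 1) :
    IntervalIntegrable (fun x : ℝ => x ^ (a - 1) * (1 - x) ^ (b - 1)) volume 0 1 := by
  have hC : IntervalIntegrable (fun x : ℝ =>
      ‖(x : ℂ) ^ ((a : ℂ) - 1) * ((1 : ℂ) - x) ^ ((b : ℂ) - 1)‖) volume 0 1 := by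
    have := (Complex.betaIntegral_convergent (u := a) (v := b) (by simpa using ha)
      (by simpa using hb)).norm
    simpa using this
  rw [intervalIntegrable_iff_integrableOn_Ioc_of_le zero_le_one] at hC ⊢
  refine hC.congr_fun (fun x hx => ?_) measurableSet_Ioc
  have hx0 : 0 < x := hx.1
  have hx1 : (0:ℝ) ≤ 1 - x := by linarith [hx.2]
  beta_reduce
  rw [norm_mul]
  rw [Complex.norm_cpow_eq_rpow_re_of_pos hx0]
  rw [show ((1:ℂ) - (x:ℂ)) = ((1 - x : ℝ) : ℂ) by push_cast; ring]
  rw [Complex.norm_cpow_eq_rpow_re_of_nonneg hx1 (by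
    simpa using sub_ne_zero.2 (by exact_mod_cast hb1))]
  simp

lemma betaAux_eval {a b : ℝ} (ha : 0 < a) (hb : 0 < b) :
    ∫ x in (0:ℝ)..1, x ^ (a - 1) * (1 - x) ^ (b - 1) =
      Real.Gamma a * Real.Gamma b / Real.Gamma (a + b) := by
  have key : Complex.Gamma a * Complex.Gamma b =
      Complex.Gamma (a + b) * Complex.betaIntegral a b :=
    Complex.Gamma_mul_Gamma_eq_betaIntegral (by simpa using ha) (by simpa using hb)
  have hbeta : Complex.betaIntegral a b =
      ((∫ x in (0:ℝ)..1, x ^ (a - 1) * (1 - x) ^ (b - 1) : ℝ) : ℂ) := by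
    rw [Complex.betaIntegral, ← intervalIntegral.integral_ofReal]
    refine intervalIntegral.integral_congr fun x hx => ?_
    rw [uIcc_of_le zero_le_one] at hx
    have hx0 : (0:ℝ) ≤ x := hx.1
    have hx1 : (0:ℝ) ≤ 1 - x := by linarith [hx.2]
    push_cast
    rw [Complex.ofReal_cpow hx0, Complex.ofReal_cpow hx1]
    push_cast
    ring
  rw [hbeta] at key
  have hG : Real.Gamma (a + b) ≠ 0 := (Real.Gamma_pos_of_pos (by linarith)).ne'
  have key2 : Real.Gamma a * Real.Gamma b =
      Real.Gamma (a + b) * ∫ x in (0:ℝ)..1, x ^ (a - 1) * (1 - x) ^ (b - 1) := by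
    have := key
    rw [Complex.Gamma_ofReal, Complex.Gamma_ofReal,
      show ((a:ℂ) + b) = ((a + b : ℝ) : ℂ) by push_cast; ring, Complex.Gamma_ofReal] at this
    exact_mod_cast this
  field_simp [key2]
  linear_combination -key2

lemma subst_lemma {n k c : ℝ} (hn : 2 < n) (hk0 : 0 < k) (hkn : k < n) (hc : 0 < c)
    (hcn : c < n) :
    ∫ x in (0:ℝ)..1, x ^ (c - 1) * (1 - x ^ n) ^ (-(k / n)) =
      (1 / n) * ∫ y in (0:ℝ)..1, y ^ (c / n - 1) * (1 - y) ^ (-(k / n)) := by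
  have hn0 : (0:ℝ) < n := by linarith
  have hkn1 : k / n < 1 := (div_lt_one hn0).2 hkn
  have hkn0 : 0 < k / n := div_pos hk0 hn0
  set F : ℝ → ℝ := fun y => y ^ (1 / n) with hF
  set F' : ℝ → ℝ := fun y => 1 / n * y ^ (1 / n - 1) with hF'
  set g : ℝ → ℝ := fun x => x ^ (c - 1) * (1 - x ^ n) ^ (-(k / n)) with hg
  set h : ℝ → ℝ := fun y => (1 / n) * (y ^ (c / n - 1) * (1 - y) ^ (-(k / n))) with hh
  -- beta-type integrability
  have hbeta : ∀ a : ℝ, 0 < a →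
      IntervalIntegrable (fun x : ℝ => x ^ (a - 1) * (1 - x) ^ (-(k / n))) volume 0 1 := by
    intro a ha
    have := betaAux_integrable ha (b := 1 - k / n) (by linarith) (by
      intro hE; rw [sub_eq_self] at hE; exact hkn0.ne' (by linarith [hE]))
    simpa [show (1 : ℝ) - k / n - 1 = -(k / n) by ring] using this
  -- pointwise bound and eq facts
  have hgnonneg : ∀ x ∈ Icc (0:ℝ) 1, 0 ≤ g x := by
    intro x hx
    have h1 : x ^ n ≤ 1 := Real.rpow_le_one hx.1 hx.2 hn0.le
    have := Real.rpow_nonneg (by linarith : (0:ℝ) ≤ 1 - x ^ n) (-(k / n))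
    exact mul_nonneg (Real.rpow_nonneg hx.1 _) this
  have hbound : ∀ x ∈ Ioc (0:ℝ) 1, g x ≤ x ^ (c - 1) * (1 - x) ^ (-(k / n)) := by
    intro x hx
    have hx0 := hx.1
    rcases eq_or_lt_of_le hx.2 with h1 | h1
    · subst h1
      simp [hg, Real.one_rpow, Real.zero_rpow (neg_ne_zero.2 hkn0.ne')]
    · have hxn : x ^ n ≤ x := by
        have := Real.rpow_le_rpow_of_exponent_ge hx0 h1.le (by linarith : (1:ℝ) ≤ n)
        simpa using this
      refine mul_le_mul_of_nonneg_left ?_ (Real.rpow_nonneg hx0.le _)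
      exact Real.rpow_le_rpow_of_nonpos (by linarith) (by linarith) (by linarith)
  have meas_g : Measurable g := by
    exact (measurable_id'.pow_const _).mul
      ((measurable_const.sub (measurable_id'.pow_const _)).pow_const _)
  -- EqOn for substituted integrand
  have heq : ∀ y ∈ Icc (0:ℝ) 1, F' y • g (F y) = h y := by
    intro y hy
    rcases eq_or_lt_of_le hy.1 with h0 | h0
    · have h1n : (1:ℝ)/n - 1 ≠ 0 := by
        intro hE; rw [sub_eq_zero, div_eq_one_iff_eq hn0.ne'] at hE; linarith
      have h2n : c/n - 1 ≠ 0 := by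
        intro hE; rw [sub_eq_zero, div_eq_one_iff_eq hn0.ne'] at hE; linarith
      rw [← h0]
      have e1 : F' 0 = 0 := by
        show 1/n * (0:ℝ) ^ (1/n - 1) = 0
        rw [Real.zero_rpow h1n, mul_zero]
      have e2 : h 0 = 0 := by
        show 1/n * ((0:ℝ) ^ (c/n - 1) * (1 - 0) ^ (-(k/n))) = 0
        rw [Real.zero_rpow h2n, zero_mul, mul_zero]
      rw [e1, e2, zero_smul]
    · have hFy : F y = y ^ (1/n) := rfl
      have hy0 : (0:ℝ) ≤ y := hy.1
      have hFyn : (F y) ^ n = y := by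
        rw [hFy, ← Real.rpow_mul hy0, one_div, inv_mul_cancel₀ hn0.ne', Real.rpow_one]
      have hFyc : (F y) ^ (c - 1) = y ^ ((1/n) * (c-1)) := by
        rw [hFy, ← Real.rpow_mul hy0]
      rw [smul_eq_mul, hg]
      simp only [hFyn, hFyc, hF', hh]
      rw [show (1:ℝ)/n * y ^ (1/n - 1) * (y ^ (1/n * (c-1)) * (1 - y) ^ (-(k/n)))
          = 1/n * ((y ^ (1/n - 1) * y ^ (1/n * (c-1))) * (1 - y) ^ (-(k/n))) by ring,
        ← Real.rpow_add h0]
      congr 2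
      field_simp
      congr 1
      ring
  -- the substitution
  have himg1 : F '' (Ioo 0 1) ⊆ Ioo (0:ℝ) 1 := by
    rintro _ ⟨y, hy, rfl⟩
    exact ⟨Real.rpow_pos_of_pos hy.1 _, Real.rpow_lt_one hy.1.le hy.2 (by positivity)⟩
  have himg2 : F '' (Set.uIcc (0:ℝ) 1) ⊆ Icc (0:ℝ) 1 := by
    rw [uIcc_of_le zero_le_one]
    rintro _ ⟨y, hy, rfl⟩
    exact ⟨Real.rpow_nonneg hy.1 _, Real.rpow_le_one hy.1 hy.2 (by positivity)⟩
  have hcont : ContinuousOn F (Set.uIcc (0:ℝ) 1) := fun y _ =>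
    (Real.continuousAt_rpow_const _ _ (Or.inr (by positivity))).continuousWithinAt
  have hderiv : ∀ y ∈ Ioo (min (0:ℝ) 1) (max 0 1), HasDerivWithinAt F (F' y) (Ioi y) y := by
    simp only [min_eq_left zero_le_one, max_eq_right zero_le_one]
    intro y hy
    have := Real.hasDerivAt_rpow_const (x := y) (p := 1/n) (Or.inl hy.1.ne')
    exact this.hasDerivWithinAt
  have hgcont : ContinuousOn g (F '' Ioo (min (0:ℝ) 1) (max 0 1)) := by
    simp only [min_eq_left zero_le_one, max_eq_right zero_le_one]
    refine ContinuousOn.mono ?_ himg1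
    intro x hx
    have hx0 := hx.1
    have hxn : x ^ n < 1 := Real.rpow_lt_one hx0.le hx.2 hn0
    refine ContinuousAt.continuousWithinAt ?_
    refine ContinuousAt.mul (Real.continuousAt_rpow_const _ _ (Or.inl hx0.ne')) ?_
    refine ContinuousAt.rpow_const ?_ (Or.inl (by linarith))
    exact (continuousAt_const.sub (Real.continuousAt_rpow_const _ _ (Or.inl hx0.ne')))
  have hgint : IntegrableOn g (F '' (Set.uIcc (0:ℝ) 1)) := by
    refine IntegrableOn.mono_set ?_ himg2
    rw [integrableOn_Icc_iff_integrableOn_Ioc]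
    have hb := (intervalIntegrable_iff_integrableOn_Ioc_of_le zero_le_one).1 (hbeta c hc)
    refine MeasureTheory.Integrable.mono hb meas_g.aestronglyMeasurable.restrict ?_
    filter_upwards [ae_restrict_mem measurableSet_Ioc] with x hx
    have h1 := hbound x hx
    have h2 := hgnonneg x (Ioc_subset_Icc_self hx)
    rw [Real.norm_eq_abs, Real.norm_eq_abs, abs_of_nonneg h2]
    exact h1.trans (le_abs_self _)
  have hint2 : IntegrableOn (fun y => F' y • g (F y)) (Set.uIcc (0:ℝ) 1) := by
    rw [uIcc_of_le zero_le_one]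
    have hb : IntervalIntegrable h volume 0 1 := (hbeta (c/n) (by positivity)).const_mul _
    have hb2 := (intervalIntegrable_iff_integrableOn_Ioc_of_le zero_le_one).1 hb
    rw [integrableOn_Icc_iff_integrableOn_Ioc]
    exact hb2.congr_fun (fun y hy => (heq y (Ioc_subset_Icc_self hy)).symm) measurableSet_Ioc
  have key := intervalIntegral.integral_comp_smul_deriv''' hcont hderiv hgcont hgint hint2
  have hF0 : F 0 = 0 := by
    show (0:ℝ) ^ (1/n) = 0
    exact Real.zero_rpow (by positivity)
  have hF1 : F 1 = 1 := by
    show (1:ℝ) ^ (1/n) = 1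
    exact Real.one_rpow _
  rw [hF0, hF1] at key
  calc ∫ x in (0:ℝ)..1, x ^ (c - 1) * (1 - x ^ n) ^ (-(k / n))
      = ∫ y in (0:ℝ)..1, F' y • g (F y) := key.symm
    _ = ∫ y in (0:ℝ)..1, h y := by
        refine intervalIntegral.integral_congr fun y hy => ?_
        rw [uIcc_of_le zero_le_one] at hy
        exact heq y hy
    _ = (1 / n) * ∫ y in (0:ℝ)..1, y ^ (c / n - 1) * (1 - y) ^ (-(k / n)) := by
        rw [hh]; exact intervalIntegral.integral_const_mul _ _

lemma ioi_eq {n k : ℝ} (hn : 2 < n) (hk1 : 1 < k) (hkn : k < n) :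
    ∫ t in Set.Ioi (1:ℝ), (t ^ n - 1) ^ (-(k / n)) =
      ∫ x in (0:ℝ)..1, x ^ (k - 2) * (1 - x ^ n) ^ (-(k / n)) := by
  have hn0 : (0:ℝ) < n := by linarith
  have himg : (fun u : ℝ => u⁻¹) '' Ioo 0 1 = Ioi (1:ℝ) := by
    ext t
    simp only [mem_image, mem_Ioo, mem_Ioi]
    constructor
    · rintro ⟨u, ⟨hu0, hu1⟩, rfl⟩
      exact one_lt_inv_iff₀.2 ⟨hu0, hu1⟩
    · intro ht
      have ht0 : (0:ℝ) < t := lt_trans one_pos ht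
      exact ⟨t⁻¹, ⟨inv_pos.2 ht0, inv_lt_one_of_one_lt₀ ht⟩, inv_inv t⟩
  have hderiv : ∀ x ∈ Ioo (0:ℝ) 1,
      HasDerivWithinAt (fun u : ℝ => u⁻¹) (-(x ^ 2)⁻¹) (Ioo 0 1) x :=
    fun x hx => (hasDerivAt_inv hx.1.ne').hasDerivWithinAt
  have key := MeasureTheory.integral_image_eq_integral_abs_deriv_smul measurableSet_Ioo hderiv
    (inv_injective.injOn) (fun t : ℝ => (t ^ n - 1) ^ (-(k / n)))
  rw [himg] at key
  rw [key]
  rw [intervalIntegral.integral_of_le zero_le_one, integral_Ioc_eq_integral_Ioo]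
  refine setIntegral_congr_fun measurableSet_Ioo fun x hx => ?_
  have hx0 : (0:ℝ) < x := hx.1
  have hxn : (0:ℝ) < x ^ n := Real.rpow_pos_of_pos hx0 n
  have hxn1 : x ^ n ≤ 1 := Real.rpow_le_one hx0.le hx.2.le hn0.le
  have h1 : (x⁻¹) ^ n - 1 = (1 - x ^ n) / x ^ n := by
    rw [Real.inv_rpow hx0.le]
    field_simp
  have h2 : ((1 - x ^ n) / x ^ n) ^ (-(k / n)) = (1 - x ^ n) ^ (-(k / n)) * x ^ k := by
    rw [Real.div_rpow (by linarith) hxn.le]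
    have h3 : (x ^ n) ^ (-(k / n)) = x ^ (-k) := by
      rw [← Real.rpow_mul hx0.le]
      congr 1
      field_simp
    rw [h3, Real.rpow_neg hx0.le, div_eq_mul_inv, inv_inv]
  have habs : |(-(x ^ 2)⁻¹)| = (x ^ 2)⁻¹ := by
    rw [abs_neg, abs_inv, abs_of_pos (pow_pos hx0 2)]
  rw [habs, smul_eq_mul, h1, h2]
  have h4 : x ^ (k - 2) = x ^ k * (x ^ (2:ℕ))⁻¹ := by
    rw [show k - 2 = k + -2 by ring, Real.rpow_add hx0, Real.rpow_neg hx0.le,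
      show ((2:ℝ)) = ((2:ℕ):ℝ) by norm_num, Real.rpow_natCast]
  rw [h4]
  ring

theorem stmt_3 (n k : ℝ) (hn : 2 < n) (hk1 : 1 < k) (hkn : k < n) :
    ∫ t in Set.Ioi (1:ℝ), (t ^ n - 1) ^ (-(k / n)) =
      (Real.sin (Real.pi / n) / Real.sin ((k - 1) * Real.pi / n)) *
        ∫ x in (0:ℝ)..1, (1 - x ^ n) ^ (-(k / n)) := by
  have hn0 : (0:ℝ) < n := by linarith
  set a : ℝ := 1 / n with ha
  set c : ℝ := (k - 1) / n with hc
  set b : ℝ := 1 - k / n with hb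
  have ha0 : 0 < a := by positivity
  have ha1 : a < 1 := by rw [ha, div_lt_one hn0]; linarith
  have hc0 : 0 < c := div_pos (by linarith) hn0
  have hc1 : c < 1 := by rw [hc, div_lt_one hn0]; linarith
  have hb0 : 0 < b := by rw [hb]; have := (div_lt_one hn0).2 hkn; linarith
  have hbm1 : b - 1 = -(k / n) := by rw [hb]; ring
  -- left integral
  have L : ∫ t in Set.Ioi (1:ℝ), (t ^ n - 1) ^ (-(k / n)) =
      (1 / n) * (Real.Gamma c * Real.Gamma b / Real.Gamma (c + b)) := by
    have hxe : ∀ x : ℝ, x ^ (k - 2) = x ^ (k - 1 - 1) := fun x => by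
      congr 1; ring
    rw [ioi_eq hn hk1 hkn]
    simp only [hxe]
    rw [subst_lemma hn (by linarith) hkn (by linarith : (0:ℝ) < k - 1) (by linarith)]
    congr 1
    rw [← betaAux_eval hc0 hb0]
    refine intervalIntegral.integral_congr fun y hy => ?_
    rw [hbm1, hc]
  have R : ∫ x in (0:ℝ)..1, (1 - x ^ n) ^ (-(k / n)) =
      (1 / n) * (Real.Gamma a * Real.Gamma b / Real.Gamma (a + b)) := by
    rw [show (fun x : ℝ => (1 - x ^ n) ^ (-(k / n))) =
        (fun x : ℝ => x ^ ((1:ℝ) - 1) * (1 - x ^ n) ^ (-(k / n))) by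
          funext x; simp]
    rw [subst_lemma hn (by linarith) hkn one_pos (by linarith)]
    congr 1
    rw [← betaAux_eval ha0 hb0]
    refine intervalIntegral.integral_congr fun y hy => ?_
    rw [hbm1, ha]
  rw [L, R]
  -- Gamma/sine algebra
  have hab : a + b = 1 - c := by rw [ha, hb, hc]; field_simp; ring
  have hcb : c + b = 1 - a := by rw [ha, hb, hc]; field_simp; ring
  have hsa : Real.sin (Real.pi * a) > 0 :=
    Real.sin_pos_of_pos_of_lt_pi (mul_pos Real.pi_pos ha0) (by nlinarith [Real.pi_pos])
  have hsc : Real.sin (Real.pi * c) > 0 :=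
    Real.sin_pos_of_pos_of_lt_pi (mul_pos Real.pi_pos hc0) (by nlinarith [Real.pi_pos])
  have hGa : 0 < Real.Gamma a := Real.Gamma_pos_of_pos ha0
  have hGc : 0 < Real.Gamma c := Real.Gamma_pos_of_pos hc0
  have hGb : 0 < Real.Gamma b := Real.Gamma_pos_of_pos hb0
  have r1 := Real.Gamma_mul_Gamma_one_sub a
  have r2 := Real.Gamma_mul_Gamma_one_sub c
  have m1 : Real.Gamma a * Real.Gamma (1 - a) * Real.sin (Real.pi * a) = Real.pi :=
    (eq_div_iff hsa.ne').1 r1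
  have m2 : Real.Gamma c * Real.Gamma (1 - c) * Real.sin (Real.pi * c) = Real.pi :=
    (eq_div_iff hsc.ne').1 r2
  have e1 : Real.Gamma (1 - a) = Real.pi / (Real.sin (Real.pi * a) * Real.Gamma a) := by
    rw [eq_div_iff (by positivity)]
    linear_combination m1
  have e2 : Real.Gamma (1 - c) = Real.pi / (Real.sin (Real.pi * c) * Real.Gamma c) := by
    rw [eq_div_iff (by positivity)]
    linear_combination m2
  have hpa : Real.pi / n = Real.pi * a := by rw [ha]; ring
  have hpc : (k - 1) * Real.pi / n = Real.pi * c := by rw [hc]; ring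
  rw [hpa, hpc, hab, hcb, e1, e2]
  have hpi := Real.pi_pos
  field_simp
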